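/- The group SL(2,ℤ) admits the presentation ⟨x, y | xyxy⁻¹x⁻¹y⁻¹, (xy)⁶⟩, where x = [[1,−1],[0,1]] and y = [[1,0],[1,1]]. -/

import Mathlib

open Matrix

def xSL : Matrix.SpecialLinearGroup (Fin 2) ℤ :=
  ⟨!![1, -1; 0, 1], by norm_num [Matrix.det_fin_two_of]⟩

def ySL : Matrix.SpecialLinearGroup (Fin 2) ℤ :=
  ⟨!![1, 0; 1, 1], by norm_num [Matrix.det_fin_two_of]⟩

namespace SL2P
abbrev SL := Matrix.SpecialLinearGroup (Fin 2) ℤ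
abbrev F := FreeGroup (Fin 2)
def φ : F →* SL := FreeGroup.lift (fun b : Fin 2 => if b = 0 then xSL else ySL)
def r1 : F := FreeGroup.of 0 * FreeGroup.of 1 * FreeGroup.of 0 * (FreeGroup.of 1)⁻¹ *
             (FreeGroup.of 0)⁻¹ * (FreeGroup.of 1)⁻¹
def r2 : F := (FreeGroup.of 0 * FreeGroup.of 1) ^ 6
def N : Subgroup F := Subgroup.normalClosure {r1, r2}
instance : N.Normal := Subgroup.normalClosure_normal

lemma φ0 : φ (FreeGroup.of 0) = xSL := by simp [φ]
lemma φ1 : φ (FreeGroup.of 1) = ySL := by simp [φ]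

lemma braidM : xSL * ySL * xSL = ySL * xSL * ySL := by
  ext i j
  simp only [Matrix.SpecialLinearGroup.coe_pow, Matrix.SpecialLinearGroup.coe_mul, Matrix.SpecialLinearGroup.coe_one]
  fin_cases i <;> fin_cases j <;>
    simp [xSL, ySL, Matrix.mul_apply, Fin.sum_univ_two]

lemma pow6M : (xSL * ySL)^6 = 1 := by
  ext i j
  simp only [Matrix.SpecialLinearGroup.coe_pow, Matrix.SpecialLinearGroup.coe_mul, Matrix.SpecialLinearGroup.coe_one]
  fin_cases i <;> fin_cases j <;>
    simp [xSL, ySL, pow_succ, Matrix.mul_apply, Fin.sum_univ_two]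

lemma φr1 : φ r1 = 1 := by
  have : φ r1 = (xSL * ySL * xSL) * (ySL * xSL * ySL)⁻¹ := by
    simp [r1, φ0, φ1, _root_.map_mul, _root_.map_inv]; group
  rw [this, braidM, mul_inv_cancel]

lemma φr2 : φ r2 = 1 := by
  have : φ r2 = (xSL * ySL)^6 := by simp [r2, φ0, φ1]
  rw [this, pow6M]

lemma N_le_ker : N ≤ φ.ker := by
  apply Subgroup.normalClosure_le_normal
  rintro g (rfl | rfl)
  · exact φr1
  · simpa using φr2

abbrev Q := F ⧸ N
def X : Q := QuotientGroup.mk (FreeGroup.of 0)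
def Y : Q := QuotientGroup.mk (FreeGroup.of 1)

lemma braidQ : X * Y * X = Y * X * Y := by
  have h : (QuotientGroup.mk r1 : Q) = 1 := by
    rw [QuotientGroup.eq_one_iff]
    exact Subgroup.subset_normalClosure (by simp)
  have : X * Y * X * Y⁻¹ * X⁻¹ * Y⁻¹ = 1 := by
    simpa [r1, X, Y, QuotientGroup.mk_mul, QuotientGroup.mk_inv] using h
  have h2 : X * Y * X * (Y * X * Y)⁻¹ = 1 := by
    rw [← this]; group
  exact mul_inv_eq_one.mp h2

end SL2P
namespace SL2P
lemma pow6Q : (X * Y)^6 = 1 := by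
  have h : (QuotientGroup.mk r2 : Q) = 1 := by
    rw [QuotientGroup.eq_one_iff]
    exact Subgroup.subset_normalClosure (by simp)
  simpa [r2, X, Y] using h

def s : Q := X * Y * X
def u : Q := X * Y
def z : Q := u ^ 3

lemma s_sq : s ^ 2 = z := by
  have h : s ^ 2 = (X*Y*X) * (Y*X*Y) := by rw [s, sq]; nth_rewrite 2 [braidQ]; rfl
  rw [h, z, u]
  simp [pow_succ, mul_assoc]

lemma u6 : u ^ 6 = 1 := pow6Q
lemma z_sq : z ^ 2 = 1 := by
  rw [z, ← pow_mul]
  norm_num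
  exact u6
lemma zs : z * s = s * z := by rw [← s_sq]; group
lemma zu : z * u = u * z := by rw [z]; group
lemma s_inv : s⁻¹ = z * s := by
  have h : s * (z * s) = 1 := by
    rw [zs, ← mul_assoc, ← sq, s_sq, ← sq, z_sq]
  exact inv_eq_of_mul_eq_one_right h
lemma u_inv : u⁻¹ = z * (u * u) := by
  have h : u * (z * (u * u)) = 1 := by
    have h1 : u * (z * (u * u)) = z * u ^ 3 := by
      rw [← mul_assoc, ← zu, pow_succ, pow_succ, pow_one]
      simp [mul_assoc]
    rw [h1, ← z, ← sq, z_sq]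
  exact inv_eq_of_mul_eq_one_right h
lemma X_eq : X = u⁻¹ * s := by rw [u, s]; group
lemma Y_eq : Y = s⁻¹ * (u * u) := by rw [u, s]; group
end SL2P
namespace SL2P

inductive Ltr | sg | u1 | u2
deriving DecidableEq

def isS : Ltr → Bool | .sg => true | _ => false

def evQ : Ltr → Q | .sg => s | .u1 => u | .u2 => u * u

def evq (l : List Ltr) : Q := (l.map evQ).prod

def Alt (l : List Ltr) : Prop := l.Chain' (fun a b => isS a ≠ isS b)

lemma evq_nil : evq [] = 1 := rfl
lemma evq_cons (a l) : evq (a :: l) = evQ a * evq l := by simp [evq]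

def C : Set Q := {q | ∃ (δ : ℕ) (l : List Ltr), Alt l ∧ q = z ^ δ * evq l}

lemma one_mem_C : (1 : Q) ∈ C := ⟨0, [], List.isChain_nil, by simp [evq_nil]⟩

lemma z_mem_C {q : Q} (h : q ∈ C) : z * q ∈ C := by
  obtain ⟨δ, l, hl, rfl⟩ := h
  exact ⟨δ + 1, l, hl, by rw [← mul_assoc, ← pow_succ']⟩

lemma zpow_comm_s (δ : ℕ) : s * z ^ δ = z ^ δ * s :=
  (((show Commute z s from zs).pow_left δ).eq).symm

lemma zpow_comm_u (δ : ℕ) : u * z ^ δ = z ^ δ * u :=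
  (((show Commute z u from zu).pow_left δ).eq).symm

lemma alt_tail {a : Ltr} {l : List Ltr} (h : Alt (a :: l)) : Alt l := h.tail

lemma alt_head_swap {a b : Ltr} {l : List Ltr} (hab : isS a = isS b) (h : Alt (a :: l)) :
    Alt (b :: l) := by
  cases l with
  | nil => simp [Alt, List.Chain', List.isChain_singleton]
  | cons c l'' =>
    simp only [Alt, List.Chain', List.isChain_cons_cons] at *
    exact ⟨hab ▸ h.1, h.2⟩

lemma s_mem_C {q : Q} (h : q ∈ C) : s * q ∈ C := by
  obtain ⟨δ, l, hl, rfl⟩ := h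
  rw [← mul_assoc, zpow_comm_s, mul_assoc]
  match l, hl with
  | [], _ => exact ⟨δ, [.sg], by simp [Alt, List.Chain', List.isChain_singleton], by simp [evq_cons, evq_nil, evQ]⟩
  | .sg :: l', hl =>
    refine ⟨δ + 1, l', alt_tail hl, ?_⟩
    rw [evq_cons]
    show z ^ δ * (s * (s * evq l')) = z ^ (δ+1) * evq l'
    rw [← mul_assoc s, ← sq, s_sq, pow_succ, mul_assoc]
  | .u1 :: l', hl =>
    refine ⟨δ, .sg :: .u1 :: l', hl.cons (by simp [isS]), ?_⟩
    rw [evq_cons, evq_cons, evq_cons]; rfl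
  | .u2 :: l', hl =>
    refine ⟨δ, .sg :: .u2 :: l', hl.cons (by simp [isS]), ?_⟩
    rw [evq_cons, evq_cons, evq_cons]; rfl

lemma u_mem_C {q : Q} (h : q ∈ C) : u * q ∈ C := by
  obtain ⟨δ, l, hl, rfl⟩ := h
  rw [← mul_assoc, zpow_comm_u, mul_assoc]
  match l, hl with
  | [], _ => exact ⟨δ, [.u1], by simp [Alt, List.Chain', List.isChain_singleton], by simp [evq_cons, evq_nil, evQ]⟩
  | .sg :: l', hl =>
    refine ⟨δ, .u1 :: .sg :: l', hl.cons (by simp [isS]), ?_⟩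
    rw [evq_cons, evq_cons, evq_cons]; rfl
  | .u1 :: l', hl =>
    refine ⟨δ, .u2 :: l', alt_head_swap (a := Ltr.u1) rfl hl, ?_⟩
    rw [evq_cons, evq_cons]
    show z ^ δ * (u * (u * evq l')) = z ^ δ * (u * u * evq l')
    rw [mul_assoc]
  | .u2 :: l', hl =>
    refine ⟨δ + 1, l', alt_tail hl, ?_⟩
    rw [evq_cons]
    have h3 : u * (evQ Ltr.u2 * evq l') = z * evq l' := by
      show u * (u * u * evq l') = z * evq l'
      have hz : z = u * (u * u) := by
        rw [show z = u ^ 3 from rfl, pow_succ, pow_succ, pow_one, mul_assoc]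
      rw [hz]
      simp [mul_assoc]
    rw [h3, ← mul_assoc, ← pow_succ]

end SL2P
namespace SL2P

lemma sinv_mem_C {q : Q} (h : q ∈ C) : s⁻¹ * q ∈ C := by
  rw [s_inv, mul_assoc]; exact z_mem_C (s_mem_C h)

lemma uinv_mem_C {q : Q} (h : q ∈ C) : u⁻¹ * q ∈ C := by
  rw [u_inv, mul_assoc, mul_assoc]; exact z_mem_C (u_mem_C (u_mem_C h))

lemma X_mem_C {q : Q} (h : q ∈ C) : X * q ∈ C := by
  rw [X_eq, mul_assoc]; exact uinv_mem_C (s_mem_C h)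

lemma Xinv_mem_C {q : Q} (h : q ∈ C) : X⁻¹ * q ∈ C := by
  have : X⁻¹ = s⁻¹ * u := by rw [X_eq]; group
  rw [this, mul_assoc]; exact sinv_mem_C (u_mem_C h)

lemma Y_mem_C {q : Q} (h : q ∈ C) : Y * q ∈ C := by
  rw [Y_eq, mul_assoc, mul_assoc]; exact sinv_mem_C (u_mem_C (u_mem_C h))

lemma Yinv_mem_C {q : Q} (h : q ∈ C) : Y⁻¹ * q ∈ C := by
  have : Y⁻¹ = u⁻¹ * (u⁻¹ * s) := by rw [Y_eq]; group
  rw [this, mul_assoc, mul_assoc]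
  exact uinv_mem_C (uinv_mem_C (s_mem_C h))

lemma gen_mem_C (i : Fin 2) {q : Q} (h : q ∈ C) :
    (QuotientGroup.mk (FreeGroup.of i) : Q) * q ∈ C := by
  fin_cases i
  · exact X_mem_C h
  · exact Y_mem_C h

lemma geninv_mem_C (i : Fin 2) {q : Q} (h : q ∈ C) :
    (QuotientGroup.mk (FreeGroup.of i) : Q)⁻¹ * q ∈ C := by
  fin_cases i
  · exact Xinv_mem_C h
  · exact Yinv_mem_C h

lemma all_mem_C (g : F) : ∀ q ∈ C, (QuotientGroup.mk g : Q) * q ∈ C := by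
  induction g using FreeGroup.induction_on with
  | C1 => intro q hq; simpa using hq
  | of i => exact fun q hq => gen_mem_C i hq
  | inv_of i _ => intro q hq; exact geninv_mem_C i hq
  | mul a b ha hb =>
    intro q hq
    rw [QuotientGroup.mk_mul, mul_assoc]
    exact ha _ (hb _ hq)

lemma mk_mem_C (g : F) : (QuotientGroup.mk g : Q) ∈ C := by
  simpa using all_mem_C g 1 one_mem_C

end SL2P
namespace SL2P

def Sm : SL := ⟨!![0,-1;1,0], by norm_num [Matrix.det_fin_two_of]⟩
def Um : SL := ⟨!![0,-1;1,1], by norm_num [Matrix.det_fin_two_of]⟩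
def negI : SL := ⟨!![-1,0;0,-1], by norm_num [Matrix.det_fin_two_of]⟩

lemma Sm_eq : xSL * ySL * xSL = Sm := by
  ext i j
  simp only [Matrix.SpecialLinearGroup.coe_pow, Matrix.SpecialLinearGroup.coe_mul, Matrix.SpecialLinearGroup.coe_one]
  fin_cases i <;> fin_cases j <;>
    simp [xSL, ySL, Sm, Matrix.mul_apply, Fin.sum_univ_two]

lemma Um_eq : xSL * ySL = Um := by
  ext i j
  simp only [Matrix.SpecialLinearGroup.coe_pow, Matrix.SpecialLinearGroup.coe_mul, Matrix.SpecialLinearGroup.coe_one]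
  fin_cases i <;> fin_cases j <;>
    simp [xSL, ySL, Um, Matrix.mul_apply, Fin.sum_univ_two]

lemma Um3_eq : Um ^ 3 = negI := by
  ext i j
  simp only [Matrix.SpecialLinearGroup.coe_pow, Matrix.SpecialLinearGroup.coe_mul, Matrix.SpecialLinearGroup.coe_one]
  fin_cases i <;> fin_cases j <;>
    simp [Um, negI, pow_succ, Matrix.mul_apply, Fin.sum_univ_two]

def π : Q →* SL := QuotientGroup.lift N φ N_le_ker

lemma π_mk (g : F) : π (QuotientGroup.mk g) = φ g := rfl

lemma π_X : π X = xSL := by rw [X, π_mk, φ0]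
lemma π_Y : π Y = ySL := by rw [Y, π_mk, φ1]
lemma π_s : π s = Sm := by rw [s, _root_.map_mul, _root_.map_mul, π_X, π_Y, Sm_eq]
lemma π_u : π u = Um := by rw [u, _root_.map_mul, π_X, π_Y, Um_eq]
lemma π_z : π z = negI := by rw [show z = u ^ 3 from rfl, map_pow, π_u, Um3_eq]

def evM : Ltr → SL | .sg => Sm | .u1 => Um | .u2 => Um * Um

def evm (l : List Ltr) : SL := (l.map evM).prod

lemma π_evQ (t : Ltr) : π (evQ t) = evM t := by
  cases t <;> simp [evQ, evM, π_s, π_u]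

lemma π_evq (l : List Ltr) : π (evq l) = evm l := by
  induction l with
  | nil => simp [evq, evm]
  | cons a l ih =>
    rw [evq_cons, _root_.map_mul, π_evQ, ih]
    simp [evm]

end SL2P
namespace SL2P

def n1 (v : Fin 2 → ℤ) : ℕ := (v 0).natAbs + (v 1).natAbs
def QU (v : Fin 2 → ℤ) : Prop := (0 < v 0 ∧ 0 < v 1) ∨ (v 0 < 0 ∧ v 1 < 0)
def QS (v : Fin 2 → ℤ) : Prop := (v 0 < 0 ∧ 0 < v 1) ∨ (0 < v 0 ∧ v 1 < 0)

def inOK : Ltr → (Fin 2 → ℤ) → Prop | .sg => QS | _ => QU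
def outOK : Ltr → (Fin 2 → ℤ) → Prop | .sg => QU | _ => QS

lemma mulVec_Sm (v : Fin 2 → ℤ) : (Sm.1).mulVec v = ![-(v 1), v 0] := by
  funext i
  fin_cases i <;> simp [Sm, Matrix.mulVec, dotProduct, Fin.sum_univ_two]

lemma mulVec_Um (v : Fin 2 → ℤ) : (Um.1).mulVec v = ![-(v 1), v 0 + v 1] := by
  funext i
  fin_cases i <;> simp [Um, Matrix.mulVec, dotProduct, Fin.sum_univ_two]

lemma mulVec_Um2 (v : Fin 2 → ℤ) : ((Um * Um).1).mulVec v = ![-(v 0) - v 1, v 0] := by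
  funext i
  simp only [Matrix.SpecialLinearGroup.coe_mul]
  fin_cases i <;>
    simp [Um, Matrix.SpecialLinearGroup.coe_mul, Matrix.mul_apply, Matrix.mulVec,
      dotProduct, Fin.sum_univ_two] <;> ring

lemma step (t : Ltr) (v : Fin 2 → ℤ) (h : inOK t v) :
    outOK t ((evM t).1.mulVec v) ∧ n1 v ≤ n1 ((evM t).1.mulVec v) ∧
      (isS t = false → n1 v < n1 ((evM t).1.mulVec v)) := by
  cases t
  · rw [show evM Ltr.sg = Sm from rfl, mulVec_Sm]
    simp only [inOK, outOK, QU, QS, n1, isS, Matrix.cons_val_zero, Matrix.cons_val_one,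
      Matrix.head_cons] at *
    exact ⟨by omega, by omega, by simp⟩
  · rw [show evM Ltr.u1 = Um from rfl, mulVec_Um]
    simp only [inOK, outOK, QU, QS, n1, isS, Matrix.cons_val_zero, Matrix.cons_val_one,
      Matrix.head_cons] at *
    omega
  · rw [show evM Ltr.u2 = Um * Um from rfl, mulVec_Um2]
    simp only [inOK, outOK, QU, QS, n1, isS, Matrix.cons_val_zero, Matrix.cons_val_one,
      Matrix.head_cons] at *
    omega

end SL2P
namespace SL2P

lemma evm_cons (a l) : evm (a :: l) = evM a * evm l := by simp [evm]

lemma out_to_in {a b : Ltr} (hab : isS a ≠ isS b) {w : Fin 2 → ℤ} (h : outOK b w) :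
    inOK a w := by
  cases a <;> cases b <;> simp [isS] at hab <;> exact h

lemma key : ∀ (l : List Ltr) (a : Ltr), Alt (a :: l) → ∀ v : Fin 2 → ℤ,
    inOK ((a :: l).getLast (List.cons_ne_nil a l)) v →
    outOK a ((evm (a :: l)).1.mulVec v) ∧ n1 v ≤ n1 ((evm (a :: l)).1.mulVec v) ∧
      ((l ≠ [] ∨ isS a = false) → n1 v < n1 ((evm (a :: l)).1.mulVec v)) := by
  intro l
  induction l with
  | nil =>
    intro a _ v hv
    have h0 : evm [a] = evM a := by simp [evm]
    rw [h0]
    obtain ⟨h1, h2, h3⟩ := step a v hv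
    exact ⟨h1, h2, fun h => h3 (by tauto)⟩
  | cons b l' ih =>
    intro a halt v hv
    have hab : isS a ≠ isS b := (List.isChain_cons_cons.mp halt).1
    have halt' : Alt (b :: l') := (List.isChain_cons_cons.mp halt).2
    have hlast : (a :: b :: l').getLast (List.cons_ne_nil _ _) =
        (b :: l').getLast (List.cons_ne_nil _ _) := List.getLast_cons (List.cons_ne_nil _ _)
    rw [hlast] at hv
    obtain ⟨ih1, ih2, ih3⟩ := ih b halt' v hv
    set w := (evm (b :: l')).1.mulVec v with hw
    have hmv : (evm (a :: b :: l')).1.mulVec v = (evM a).1.mulVec w := by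
      rw [evm_cons, Matrix.SpecialLinearGroup.coe_mul, ← Matrix.mulVec_mulVec]
    rw [hmv]
    obtain ⟨s1, s2, s3⟩ := step a w (out_to_in hab ih1)
    refine ⟨s1, le_trans ih2 s2, fun _ => ?_⟩
    cases ha : isS a with
    | false => exact lt_of_le_of_lt ih2 (s3 ha)
    | true =>
      have hb : isS b = false := by
        cases hba : isS b
        · rfl
        · rw [ha, hba] at hab
          exact absurd rfl hab
      exact lt_of_lt_of_le (ih3 (Or.inr hb)) s2


lemma Sm_ne_one : Sm ≠ 1 := by
  intro h
  have := congrArg (fun A => A.1 0 0) h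
  simp [Sm] at this

lemma Sm_ne_negI : Sm ≠ negI := by
  intro h
  have := congrArg (fun A => A.1 0 0) h
  simp [Sm, negI] at this

lemma mulVec_negI (v : Fin 2 → ℤ) : (negI.1).mulVec v = ![-(v 0), -(v 1)] := by
  funext i
  fin_cases i <;> simp [negI, Matrix.mulVec, dotProduct, Fin.sum_univ_two]

lemma norm_contra {l' : List Ltr} {a : Ltr} (hl : Alt (a :: l'))
    (hstrict : l' ≠ [] ∨ isS a = false) :
    evm (a :: l') ≠ 1 ∧ evm (a :: l') ≠ negI := by
  cases hL : (a :: l').getLast (List.cons_ne_nil a l') with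
  | sg =>
    have hin : inOK ((a :: l').getLast (List.cons_ne_nil a l')) ![1, -1] := by
      rw [hL]; exact Or.inr ⟨by norm_num, by norm_num⟩
    obtain ⟨_, _, h3⟩ := key l' a hl ![1, -1] hin
    have hlt := h3 hstrict
    have hnv : n1 ![(1:ℤ), -1] = 2 := by simp [n1]
    constructor
    · intro h1
      rw [h1, Matrix.SpecialLinearGroup.coe_one, Matrix.one_mulVec] at hlt
      omega
    · intro h1
      rw [h1, mulVec_negI] at hlt
      simp only [n1, Matrix.cons_val_zero, Matrix.cons_val_one, Matrix.head_cons,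
        Int.natAbs_neg] at hlt hnv
      omega
  | u1 =>
    have hin : inOK ((a :: l').getLast (List.cons_ne_nil a l')) ![1, 1] := by
      rw [hL]; exact Or.inl ⟨by norm_num, by norm_num⟩
    obtain ⟨_, _, h3⟩ := key l' a hl ![1, 1] hin
    have hlt := h3 hstrict
    have hnv : n1 ![(1:ℤ), 1] = 2 := by simp [n1]
    constructor
    · intro h1
      rw [h1, Matrix.SpecialLinearGroup.coe_one, Matrix.one_mulVec] at hlt
      omega
    · intro h1
      rw [h1, mulVec_negI] at hlt
      simp only [n1, Matrix.cons_val_zero, Matrix.cons_val_one, Matrix.head_cons,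
        Int.natAbs_neg] at hlt hnv
      omega
  | u2 =>
    have hin : inOK ((a :: l').getLast (List.cons_ne_nil a l')) ![1, 1] := by
      rw [hL]; exact Or.inl ⟨by norm_num, by norm_num⟩
    obtain ⟨_, _, h3⟩ := key l' a hl ![1, 1] hin
    have hlt := h3 hstrict
    have hnv : n1 ![(1:ℤ), 1] = 2 := by simp [n1]
    constructor
    · intro h1
      rw [h1, Matrix.SpecialLinearGroup.coe_one, Matrix.one_mulVec] at hlt
      omega
    · intro h1
      rw [h1, mulVec_negI] at hlt
      simp only [n1, Matrix.cons_val_zero, Matrix.cons_val_one, Matrix.head_cons,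
        Int.natAbs_neg] at hlt hnv
      omega

lemma alt_ne_pm {l : List Ltr} (hl : Alt l) (hne : l ≠ []) :
    evm l ≠ 1 ∧ evm l ≠ negI := by
  match l, hl, hne with
  | a :: l', hl, _ =>
    by_cases hcase : l' = [] ∧ a = Ltr.sg
    · obtain ⟨rfl, rfl⟩ := hcase
      have h0 : evm [Ltr.sg] = Sm := by simp [evm, evM]
      rw [h0]; exact ⟨Sm_ne_one, Sm_ne_negI⟩
    · apply norm_contra hl
      by_cases hl' : l' = []
      · right
        cases ha : isS a
        · rfl
        · exfalso
          apply hcase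
          refine ⟨hl', ?_⟩
          cases a <;> simp [isS] at ha ⊢
      · exact Or.inl hl'

end SL2P
namespace SL2P

lemma negI_mul_negI : negI * negI = 1 := by
  ext i j
  simp only [Matrix.SpecialLinearGroup.coe_pow, Matrix.SpecialLinearGroup.coe_mul, Matrix.SpecialLinearGroup.coe_one]
  fin_cases i <;> fin_cases j <;>
    simp [negI, Matrix.mul_apply, Fin.sum_univ_two]

lemma negI_ne_one : negI ≠ 1 := by
  intro h
  have := congrArg (fun A => A.1 0 0) h
  simp [negI] at this

lemma pow_pair (δ : ℕ) : (negI ^ δ = 1 ∧ z ^ δ = 1) ∨ (negI ^ δ = negI ∧ z ^ δ = z) := by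
  induction δ with
  | zero => left; simp
  | succ n ih =>
    rcases ih with ⟨h1, h2⟩ | ⟨h1, h2⟩
    · right; rw [pow_succ, pow_succ, h1, h2, one_mul, one_mul]; exact ⟨rfl, rfl⟩
    · left
      constructor
      · rw [pow_succ, h1, negI_mul_negI]
      · rw [pow_succ, h2, ← sq, z_sq]

lemma ker_le_N : φ.ker ≤ N := by
  intro g hg
  rw [MonoidHom.mem_ker] at hg
  have hC := mk_mem_C g
  obtain ⟨δ, l, hl, heq⟩ := hC
  have hπ : π (QuotientGroup.mk g) = 1 := by rw [π_mk, hg]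
  rw [heq, _root_.map_mul, map_pow, π_z, π_evq] at hπ
  rw [← QuotientGroup.eq_one_iff (G := F) (N := N)]
  rcases pow_pair δ with ⟨h1, h2⟩ | ⟨h1, h2⟩
  · -- negI^δ = 1, so evm l = 1, so l = []
    rw [h1, one_mul] at hπ
    match l, hl with
    | [], _ => rw [heq, h2, one_mul]; rfl
    | a :: l', hl => exact absurd hπ (alt_ne_pm hl (List.cons_ne_nil a l')).1
  · rw [h1] at hπ
    have hev : evm l = negI := by
      have := congrArg (fun w => negI * w) hπ
      simpa [← mul_assoc, negI_mul_negI] using this.symm |>.symm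
    match l, hl with
    | [], _ =>
      exfalso
      have : evm ([] : List Ltr) = 1 := by simp [evm]
      rw [this] at hev
      exact negI_ne_one hev.symm
    | a :: l', hl => exact absurd hev (alt_ne_pm hl (List.cons_ne_nil a l')).2

theorem ker_eq_N : φ.ker = N := le_antisymm ker_le_N N_le_ker

end SL2P
namespace SL2P

lemma xpow (n : ℤ) : (xSL ^ n).1 = !![1, -n; 0, 1] := by
  induction n using Int.induction_on with
  | zero => simp [Matrix.one_fin_two]
  | succ k ih =>
    rw [_root_.zpow_add_one, Matrix.SpecialLinearGroup.coe_mul, ih]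
    ext i j
    fin_cases i <;> fin_cases j <;>
      simp [xSL, Matrix.mul_apply, Fin.sum_univ_two] <;> ring
  | pred k ih =>
    rw [sub_eq_add_neg, _root_.zpow_add, Matrix.SpecialLinearGroup.coe_mul, ih]
    have hinv : (xSL ^ (-1 : ℤ)).1 = !![1, 1; 0, 1] := by
      rw [_root_.zpow_neg_one]
      have h1 : xSL * ⟨!![1, 1; 0, 1], by norm_num [Matrix.det_fin_two_of]⟩ = 1 := by
        ext i j
        erw [Matrix.SpecialLinearGroup.coe_mul, Matrix.SpecialLinearGroup.coe_one]
        fin_cases i <;> fin_cases j <;>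
          simp [xSL, Matrix.mul_apply, Fin.sum_univ_two]
      rw [inv_eq_of_mul_eq_one_right h1]
    rw [hinv]
    ext i j
    fin_cases i <;> fin_cases j <;>
      simp [Matrix.mul_apply, Fin.sum_univ_two] <;> ring

def H : Subgroup SL := φ.range

lemma xSL_mem : xSL ∈ H := ⟨FreeGroup.of 0, φ0⟩
lemma ySL_mem : ySL ∈ H := ⟨FreeGroup.of 1, φ1⟩
lemma Sm_mem : Sm ∈ H := by
  rw [← Sm_eq]; exact mul_mem (mul_mem xSL_mem ySL_mem) xSL_mem
lemma negI_mem : negI ∈ H := by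
  have h : Sm * Sm = negI := by
    ext i j
    simp only [Matrix.SpecialLinearGroup.coe_pow, Matrix.SpecialLinearGroup.coe_mul, Matrix.SpecialLinearGroup.coe_one]
    fin_cases i <;> fin_cases j <;>
      simp [Sm, negI, Matrix.mul_apply, Fin.sum_univ_two]
  rw [← h]; exact mul_mem Sm_mem Sm_mem

lemma surj_aux : ∀ (m : ℕ) (A : SL), (A.1 1 0).natAbs = m → A ∈ H := by
  intro m
  induction m using Nat.strong_induction_on with
  | _ m ih =>
    intro A hm
    have hA : A.1 = !![A.1 0 0, A.1 0 1; A.1 1 0, A.1 1 1] := Matrix.eta_fin_two A.1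
    by_cases hc : A.1 1 0 = 0
    · have hdet : A.1 0 0 * A.1 1 1 = 1 := by
        have h2 := A.2
        rw [Matrix.det_fin_two] at h2
        rw [hc] at h2
        linarith [h2]
      rcases Int.mul_eq_one_iff_eq_one_or_neg_one.mp hdet with ⟨h1, h2⟩ | ⟨h1, h2⟩
      · have hAeq : A = xSL ^ (-(A.1 0 1)) := by
          apply Subtype.ext
          rw [xpow, neg_neg]
          conv_lhs => rw [hA]
          rw [h1, h2, hc]
        rw [hAeq]
        exact zpow_mem xSL_mem _
      · have hAeq : A = negI * xSL ^ (A.1 0 1) := by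
          apply Subtype.ext
          rw [Matrix.SpecialLinearGroup.coe_mul, xpow]
          conv_lhs => rw [hA]
          rw [h1, h2, hc]
          ext i j
          fin_cases i <;> fin_cases j <;>
            simp [negI, Matrix.mul_apply, Fin.sum_univ_two]
        rw [hAeq]
        exact mul_mem negI_mem (zpow_mem xSL_mem _)
    · set c := A.1 1 0 with hcdef
      set n := A.1 0 0 / c with hndef
      set B := Sm * (xSL ^ n * A) with hBdef
      have hB10 : B.1 1 0 = A.1 0 0 % c := by
        rw [hBdef, Matrix.SpecialLinearGroup.coe_mul, Matrix.SpecialLinearGroup.coe_mul, xpow]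
        rw [Int.emod_def]
        nth_rewrite 1 [hA]
        simp [Sm, Matrix.mul_apply, Fin.sum_univ_two]
        ring
      have hlt : (B.1 1 0).natAbs < m := by
        rw [hB10, ← hm]
        have h1 : 0 ≤ A.1 0 0 % c := Int.emod_nonneg _ hc
        have h2 : A.1 0 0 % |c| < |c| := Int.emod_lt_of_pos _ (abs_pos.mpr hc)
        rw [Int.emod_abs] at h2
        have h3 : |c| = (c.natAbs : ℤ) := by rw [Int.abs_eq_natAbs]
        omega
      have hBmem : B ∈ H := ih _ hlt B rfl
      have hAB : A = (xSL ^ n)⁻¹ * (Sm⁻¹ * B) := by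
        rw [hBdef]
        group
      rw [hAB]
      exact mul_mem (inv_mem (zpow_mem xSL_mem n)) (mul_mem (inv_mem Sm_mem) hBmem)

theorem φ_surjective : Function.Surjective φ := by
  intro A
  have : A ∈ H := surj_aux (A.1 1 0).natAbs A rfl
  exact this

end SL2P


/-- SL(2,ℤ) = ⟨x, y ∣ xyxy⁻¹x⁻¹y⁻¹, (xy)⁶⟩ -/
theorem sl2_presentation :
    Function.Surjective (FreeGroup.lift (fun b : Fin 2 => if b = 0 then xSL else ySL)) ∧
    (FreeGroup.lift (fun b : Fin 2 => if b = 0 then xSL else ySL)).ker =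
      Subgroup.normalClosure
        ({ FreeGroup.of 0 * FreeGroup.of 1 * FreeGroup.of 0 * (FreeGroup.of 1)⁻¹ *
             (FreeGroup.of 0)⁻¹ * (FreeGroup.of 1)⁻¹,
           (FreeGroup.of 0 * FreeGroup.of 1) ^ 6 } : Set (FreeGroup (Fin 2))) := ⟨SL2P.φ_surjective, SL2P.ker_eq_N⟩
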